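/- arXiv:0910.0566 — 5 statements merged into one kernel-verified Lean document; each statement's English description precedes it below -/
import Mathlib

section
/- Let x⁰ ∈ [0,1]^n with x⁰_1 ≥ ... ≥ x⁰_n, let k ∈ {1,...,n}, and let m be the largest index with x⁰_m ≥ x⁰_k (so that x⁰_j < x⁰_k exactly for j > m). Then the set S = { x ∈ [0,1]^n : x_k < x⁰_k, or x_j > x⁰_j for some j with m+1 ≤ j ≤ n } is max-min convex. -/
open unitInterval

noncomputable def segPt {n : ℕ} (α β : I) (x y : Fin n → I) : Fin n → I :=
  fun i => max (min α (x i)) (min β (y i))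

def MaxMinConvex {n : ℕ} (C : Set (Fin n → I)) : Prop :=
  ∀ x ∈ C, ∀ y ∈ C, ∀ α β : I, max α β = 1 → segPt α β x y ∈ C

def maxMinSegment {n : ℕ} (x y : Fin n → I) : Set (Fin n → I) :=
  {z | ∃ α β : I, max α β = 1 ∧ z = segPt α β x y}

lemma key5 {n : ℕ} (x0 : Fin n → I) (k m : Fin n)
    (hmax : ∀ j : Fin n, x0 k ≤ x0 j → j ≤ m)
    (x y : Fin n → I)
    (hx : x k < x0 k ∨ ∃ j : Fin n, m < j ∧ x0 j < x j)
    (hy : y k < x0 k ∨ ∃ j : Fin n, m < j ∧ x0 j < y j) (β : I) :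
    (fun i => max (x i) (min β (y i))) k < x0 k ∨
      ∃ j : Fin n, m < j ∧ x0 j < max (x j) (min β (y j)) := by
  rcases hx with hx | ⟨j, hmj, hj⟩
  · rcases hy with hy | ⟨j, hmj, hj⟩
    · left
      exact max_lt hx (lt_of_le_of_lt (min_le_right _ _) hy)
    · by_cases hβ : β < x0 k
      · left
        exact max_lt hx (lt_of_le_of_lt (min_le_left _ _) hβ)
      · right
        refine ⟨j, hmj, ?_⟩
        have hjk : x0 j < x0 k := lt_of_not_ge fun h => absurd (hmax j h) (not_le.mpr hmj)
        exact lt_of_lt_of_le (lt_min (lt_of_lt_of_le hjk (not_lt.mp hβ)) hj)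
          (le_max_right _ _)
  · exact Or.inr ⟨j, hmj, lt_of_lt_of_le hj (le_max_left _ _)⟩

theorem stmt5 {n : ℕ} (x0 : Fin n → I)
    (hsort : ∀ i j : Fin n, i ≤ j → x0 j ≤ x0 i)
    (k m : Fin n)
    (hm : x0 k ≤ x0 m) (hmax : ∀ j : Fin n, x0 k ≤ x0 j → j ≤ m) :
    MaxMinConvex {x : Fin n → I | x k < x0 k ∨ ∃ j : Fin n, m < j ∧ x0 j < x j} := by
  intro x hx y hy α β hαβ
  have h1 : α = 1 ∨ β = 1 := by
    rcases max_cases α β with ⟨h, _⟩ | ⟨h, _⟩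
    · exact Or.inl (h ▸ hαβ)
    · exact Or.inr (h ▸ hαβ)
  rcases h1 with rfl | rfl
  · have : segPt 1 β x y = fun i => max (x i) (min β (y i)) := by
      funext i; simp [segPt, min_eq_right (le_one' : x i ≤ 1)]
    rw [Set.mem_setOf_eq, this]
    exact key5 x0 k m hmax x y hx hy β
  · have : segPt α 1 x y = fun i => max (y i) (min α (x i)) := by
      funext i; simp [segPt, min_eq_right (le_one' : y i ≤ 1), max_comm]
    rw [Set.mem_setOf_eq, this]
    exact key5 x0 k m hmax y x hy hx α
end

section
/- For any x⁰ ∈ [0,1]^n and any nonempty index set M ⊆ {1,...,n}, the set S_0^M(x⁰) = { x ∈ [0,1]^n : x_i > x⁰_i for some i ∈ M } is max-min convex, and its complement in [0,1]^n is also max-min convex (i.e., S_0^M(x⁰) is a max-min hemispace). -/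
open unitInterval

theorem stmt6 {n : ℕ} (x0 : Fin n → I) (M : Set (Fin n)) (hM : M.Nonempty) :
    MaxMinConvex {x : Fin n → I | ∃ i ∈ M, x0 i < x i} ∧
    MaxMinConvex {x : Fin n → I | ∃ i ∈ M, x0 i < x i}ᶜ := by
  constructor
  · rintro x ⟨i, hiM, hix⟩ y ⟨j, hjM, hjy⟩ α β hab
    rcases max_cases α β with ⟨h1, _⟩ | ⟨h1, _⟩
    · refine ⟨i, hiM, lt_of_lt_of_le hix ?_⟩
      have : min α (x i) = x i := by
        rw [h1] at hab; rw [hab]; exact min_eq_right (x i).2.2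
      simp [segPt, this]
    · refine ⟨j, hjM, lt_of_lt_of_le hjy ?_⟩
      have : min β (y j) = y j := by
        rw [h1] at hab; rw [hab]; exact min_eq_right (y j).2.2
      simp [segPt, this]
  · intro x hx y hy α β _
    intro hz
    obtain ⟨i, hiM, hiz⟩ := hz
    have hxi : x i ≤ x0 i := le_of_not_gt fun h => hx ⟨i, hiM, h⟩
    have hyi : y i ≤ x0 i := le_of_not_gt fun h => hy ⟨i, hiM, h⟩
    have : segPt α β x y i ≤ x0 i :=
      max_le (le_trans (min_le_right _ _) hxi) (le_trans (min_le_right _ _) hyi)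
    exact absurd hiz (not_lt.2 this)
end

section
/- Let B = [0,1]×[a,b] ⊆ [0,1]^2 with 0 ≤ a ≤ b < 1 and let z = (z_1, z_2) with z_2 > b. Then there is no max-min convex set S ⊆ [0,1]^2 such that z ∈ S and S ∩ B = ∅ and S is maximal among max-min convex sets avoiding every point of B; more concretely, no max-min semispace at any point contains z and avoids B. -/
open unitInterval

def IsSemispaceAt {n : ℕ} (S : Set (Fin n → I)) (p : Fin n → I) : Prop :=
  MaxMinConvex S ∧ p ∉ S ∧
    ∀ S' : Set (Fin n → I), MaxMinConvex S' → p ∉ S' → S ⊆ S' → S' = S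

lemma pick (A C : I) : ∃ A' C' : I, max A' C' = 1 ∧ min (max A C) A' = A ∧ min (max A C) C' = C := by
  rcases le_total A C with h | h
  · exact ⟨A, 1, max_eq_right le_one',
      by rw [max_eq_right h]; exact min_eq_right h,
      by rw [max_eq_right h]; exact min_eq_left le_one'⟩
  · exact ⟨1, C, max_eq_left le_one',
      by rw [max_eq_left h]; exact min_eq_left le_one',
      by rw [max_eq_left h]; exact min_eq_right h⟩

lemma hull_conv {n : ℕ} {S : Set (Fin n → I)} (hS : MaxMinConvex S) (r : Fin n → I) :
    MaxMinConvex {u | ∃ s ∈ S, ∃ α β : I, max α β = 1 ∧ u = segPt α β s r} := by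
  rintro u ⟨s, hs, α, β, hαβ, rfl⟩ v ⟨s', hs', γ, δ, hγδ, rfl⟩ μ ν hμν
  obtain ⟨A', C', h1, hA, hC⟩ := pick (min μ α) (min ν γ)
  refine ⟨segPt A' C' s s', hS s hs s' hs' A' C' h1,
    max (min μ α) (min ν γ), max (min μ β) (min ν δ), ?_, ?_⟩
  · rw [max_max_max_comm, ← min_max_distrib_left, ← min_max_distrib_left, hαβ, hγδ,
      min_eq_left le_one', min_eq_left le_one', hμν]
  · funext i
    show max (min μ (max (min α (s i)) (min β (r i))))
        (min ν (max (min γ (s' i)) (min δ (r i))))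
      = max (min (max (min μ α) (min ν γ)) (max (min A' (s i)) (min C' (s' i))))
        (min (max (min μ β) (min ν δ)) (r i))
    have e1 : min (max (min μ α) (min ν γ)) (max (min A' (s i)) (min C' (s' i)))
        = max (min (min μ α) (s i)) (min (min ν γ) (s' i)) := by
      rw [min_max_distrib_left, ← min_assoc, ← min_assoc, hA, hC]
    have e2 : min (max (min μ β) (min ν δ)) (r i)
        = max (min (min μ β) (r i)) (min (min ν δ) (r i)) := min_max_distrib_right _ _ _
    rw [e1, e2, min_max_distrib_left, min_max_distrib_left, ← min_assoc, ← min_assoc,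
      ← min_assoc, ← min_assoc, max_max_max_comm]

theorem stmt7 (a b : I) (hab : a ≤ b) (hb : b < 1) (z : Fin 2 → I) (hz : b < z 1) :
    ¬ ∃ (p : Fin 2 → I) (S : Set (Fin 2 → I)), IsSemispaceAt S p ∧ z ∈ S ∧
      S ∩ {w : Fin 2 → I | a ≤ w 1 ∧ w 1 ≤ b} = ∅ := by
  rintro ⟨p, S, ⟨hconv, hpS, hmax⟩, hzS, hdis⟩
  have hdis' : ∀ w ∈ S, ¬ (a ≤ w 1 ∧ w 1 ≤ b) := by
    intro w hw hwB
    exact Set.eq_empty_iff_forall_notMem.mp hdis w ⟨hw, hwB⟩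
  have hB : ∀ s ∈ S, b < s 1 := by
    intro s hs
    by_contra h
    push_neg at h
    have hu : segPt b 1 z s ∈ S := hconv z hzS s hs b 1 (max_eq_right le_one')
    have hu1 : segPt b 1 z s 1 = b := by
      show max (min b (z 1)) (min 1 (s 1)) = b
      rw [min_eq_left hz.le, min_eq_right le_one', max_eq_left h]
    exact hdis' _ hu ⟨by rw [hu1]; exact hab, by rw [hu1]⟩
  have key : ∀ r : Fin 2 → I, r 1 = b →
      ∃ s ∈ S, ∃ α β : I, max α β = 1 ∧ p = segPt α β s r := by
    intro r hr
    by_cases hp : p ∈ {u | ∃ s ∈ S, ∃ α β : I, max α β = 1 ∧ u = segPt α β s r}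
    · exact hp
    · exfalso
      have hsub : S ⊆ {u | ∃ s ∈ S, ∃ α β : I, max α β = 1 ∧ u = segPt α β s r} := by
        intro s hs
        refine ⟨s, hs, 1, 0, max_eq_left le_one', ?_⟩
        funext i
        show s i = max (min 1 (s i)) (min 0 (r i))
        rw [min_eq_right le_one', min_eq_left nonneg', max_eq_left nonneg']
      have hT := hmax _ (hull_conv hconv r) hp hsub
      have hrT : r ∈ {u | ∃ s ∈ S, ∃ α β : I, max α β = 1 ∧ u = segPt α β s r} := by
        refine ⟨z, hzS, 0, 1, max_eq_right le_one', ?_⟩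
        funext i
        show r i = max (min 0 (z i)) (min 1 (r i))
        rw [min_eq_right le_one', min_eq_left nonneg', max_eq_right nonneg']
      rw [hT] at hrT
      have := hB r hrT
      rw [hr] at this
      exact lt_irrefl b this
  obtain ⟨s, hs, α, β, hαβ, hps⟩ := key ![0, b] (by simp)
  obtain ⟨s', hs', α', β', hαβ', hps'⟩ := key ![1, b] (by simp)
  have hp0 : p 0 = min α (s 0) := by
    rw [hps]
    show max (min α (s 0)) (min β (![(0:I), b] 0)) = _
    simp only [Matrix.cons_val_zero]
    rw [min_eq_right nonneg', max_eq_left nonneg']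
  have hp1 : p 1 = max (min α (s 1)) (min β b) := by
    rw [hps]
    show max (min α (s 1)) (min β (![(0:I), b] 1)) = _
    simp only [Matrix.cons_val_one, Matrix.head_cons, Matrix.cons_val_zero]
  by_cases hα : α = 1
  · apply hpS
    have hpe : p = s := by
      funext i
      fin_cases i
      · show p 0 = s 0
        rw [hp0, hα, min_eq_right le_one']
      · show p 1 = s 1
        rw [hp1, hα, min_eq_right le_one',
          max_eq_left (le_trans (min_le_right β b) (hB s hs).le)]
    rw [hpe]; exact hs
  · have hα1 : α < 1 := lt_of_le_of_ne le_one' hα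
    by_cases hα' : α' = 1
    · have hq0 : p 0 = max (s' 0) β' := by
        rw [hps']
        show max (min α' (s' 0)) (min β' (![(1:I), b] 0)) = _
        simp only [Matrix.cons_val_zero]
        rw [hα', min_eq_right le_one', min_eq_left le_one']
      have hq1 : p 1 = s' 1 := by
        rw [hps']
        show max (min α' (s' 1)) (min β' (![(1:I), b] 1)) = _
        simp only [Matrix.cons_val_one, Matrix.head_cons, Matrix.cons_val_zero]
        rw [hα', min_eq_right le_one',
          max_eq_left (le_trans (min_le_right β' b) (hB s' hs').le)]
      have hpb : b < p 1 := by rw [hq1]; exact hB s' hs'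
      have hmin : min α (s 1) = p 1 := by
        rcases max_cases (min α (s 1)) (min β b) with ⟨h1, _⟩ | ⟨h1, _⟩
        · rw [hp1, h1]
        · exfalso
          have : p 1 ≤ b := by
            rw [hp1, h1]; exact min_le_right β b
          exact absurd hpb (not_lt_of_ge this)
      apply hpS
      have hu : segPt α 1 s s' ∈ S := hconv s hs s' hs' α 1 (max_eq_right le_one')
      have hpe : p = segPt α 1 s s' := by
        funext i
        fin_cases i
        · show p 0 = max (min α (s 0)) (min 1 (s' 0))
          rw [min_eq_right le_one', ← hp0]
          have hle : s' 0 ≤ p 0 := by rw [hq0]; exact le_max_left _ _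
          exact (max_eq_left hle).symm
        · show p 1 = max (min α (s 1)) (min 1 (s' 1))
          rw [min_eq_right le_one', hmin, ← hq1, max_self]
      rw [hpe]; exact hu
    · have hβ' : β' = 1 := by
        rcases max_choice α' β' with h | h
        · exact absurd (h.symm.trans hαβ') hα'
        · exact h.symm.trans hαβ'
      have hq0 : p 0 = 1 := by
        rw [hps']
        show max (min α' (s' 0)) (min β' (![(1:I), b] 0)) = 1
        simp only [Matrix.cons_val_zero]
        rw [hβ', min_eq_left le_one', max_eq_right le_one']
      have hlt : p 0 < 1 := lt_of_le_of_lt (by rw [hp0]; exact min_le_left α (s 0)) hα1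
      rw [hq0] at hlt
      exact lt_irrefl 1 hlt
end

section
/- In [0,1]^2, let a=(x_a,y_a), b=(x_b,y_b), c=(x_c,y_c) with x_a ≤ x_b ≤ x_c, y_b ≤ y_a ≤ y_c, and let B_0 = [x_a,x_c]×[y_b,y_c]. Then the set T_1 = B_0 ∩ {(x,y) : x < x_b, y < y_a} is max-min convex. -/
open unitInterval

theorem stmt10 (xa ya xb yb xc yc : I)
    (h1 : xa ≤ xb) (h2 : xb ≤ xc) (h3 : yb ≤ ya) (h4 : ya ≤ yc) :
    MaxMinConvex {z : Fin 2 → I |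
      (xa ≤ z 0 ∧ z 0 ≤ xc) ∧ (yb ≤ z 1 ∧ z 1 ≤ yc) ∧ z 0 < xb ∧ z 1 < ya} := by
  rintro x ⟨⟨hx0l, hx0r⟩, ⟨hx1l, hx1r⟩, hx0b, hx1b⟩
         y ⟨⟨hy0l, hy0r⟩, ⟨hy1l, hy1r⟩, hy0b, hy1b⟩ α β hαβ
  have hone : α = 1 ∨ β = 1 := by
    rcases max_choice α β with h | h
    · left; rw [← h, hαβ]
    · right; rw [← h, hαβ]
  simp only [Set.mem_setOf_eq, segPt]
  refine ⟨⟨?_, ?_⟩, ⟨?_, ?_⟩, ?_, ?_⟩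
  · rcases hone with h | h
    · exact le_max_of_le_left (by simp [h, hx0l, unitInterval.le_one'])
    · exact le_max_of_le_right (by simp [h, hy0l, unitInterval.le_one'])
  · exact max_le (le_trans (min_le_right _ _) hx0r) (le_trans (min_le_right _ _) hy0r)
  · rcases hone with h | h
    · exact le_max_of_le_left (by simp [h, hx1l, unitInterval.le_one'])
    · exact le_max_of_le_right (by simp [h, hy1l, unitInterval.le_one'])
  · exact max_le (le_trans (min_le_right _ _) hx1r) (le_trans (min_le_right _ _) hy1r)
  · exact max_lt (lt_of_le_of_lt (min_le_right _ _) hx0b) (lt_of_le_of_lt (min_le_right _ _) hy0b)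
  · exact max_lt (lt_of_le_of_lt (min_le_right _ _) hx1b) (lt_of_le_of_lt (min_le_right _ _) hy1b)
end

section
/- Let 0 ≤ a < b ≤ 1, C_1 = [(a,a,a),(b,b,b)]_M and C_2 = [(b,a,a),(a,b,a)]_M in [0,1]^3. Then C_1 ∩ C_2 = ∅, the smallest box containing C_1 is [a,b]^3, the smallest box containing C_2 is [a,b]×[a,b]×{a}, and hence the smallest box of C_2 is contained in the smallest box of C_1; consequently there is no box containing one of the two sets and disjoint from the other. -/
open unitInterval

def Box3 (lo hi : Fin 3 → I) : Set (Fin 3 → I) :=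
  {z | ∀ i, lo i ≤ z i ∧ z i ≤ hi i}

lemma I_min_one (t : I) : min 1 t = t := min_eq_right le_one'
lemma I_min_zero (t : I) : min 0 t = 0 := min_eq_left nonneg'

lemma seg_left {n : ℕ} (x y : Fin n → I) : x ∈ maxMinSegment x y :=
  ⟨1, 0, by simp [I_min_one], by
    funext i; simp [segPt, I_min_one, I_min_zero, max_eq_left nonneg']⟩

lemma seg_right {n : ℕ} (x y : Fin n → I) : y ∈ maxMinSegment x y :=
  ⟨0, 1, by simp [I_min_one], by
    funext i; simp [segPt, I_min_one, I_min_zero, max_eq_right nonneg']⟩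

lemma I_one_of_max {α β : I} (h : max α β = 1) : α = 1 ∨ β = 1 := by
  rcases max_choice α β with h' | h' <;> rw [h'] at h
  · exact Or.inl h
  · exact Or.inr h

lemma seg_const (a α β : I) (h : max α β = 1) :
    max (min α a) (min β a) = a := by
  rcases I_one_of_max h with rfl | rfl
  · rw [I_min_one]; exact max_eq_left (min_le_right _ _)
  · rw [I_min_one]; exact max_eq_right (min_le_right _ _)

lemma t_bounds (a b : I) (hab : a ≤ b) (α β : I) (h : max α β = 1) :
    a ≤ max (min α a) (min β b) ∧ max (min α a) (min β b) ≤ b := by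
  constructor
  · rcases I_one_of_max h with rfl | rfl
    · rw [I_min_one]; exact le_max_left _ _
    · rw [I_min_one]; exact le_trans hab (le_max_right _ _)
  · exact max_le (le_trans (min_le_right _ _) hab) (min_le_right _ _)

theorem stmt14 (a b : I) (hab : a < b) :
    maxMinSegment (![a, a, a]) (![b, b, b]) ∩
      maxMinSegment (![b, a, a]) (![a, b, a]) = ∅ ∧
    (maxMinSegment (![a, a, a]) (![b, b, b]) ⊆ Box3 ![a, a, a] ![b, b, b] ∧
      ∀ lo hi : Fin 3 → I, (∀ i, lo i ≤ hi i) →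
        maxMinSegment (![a, a, a]) (![b, b, b]) ⊆ Box3 lo hi →
        Box3 ![a, a, a] ![b, b, b] ⊆ Box3 lo hi) ∧
    (maxMinSegment (![b, a, a]) (![a, b, a]) ⊆ Box3 ![a, a, a] ![b, b, a] ∧
      ∀ lo hi : Fin 3 → I, (∀ i, lo i ≤ hi i) →
        maxMinSegment (![b, a, a]) (![a, b, a]) ⊆ Box3 lo hi →
        Box3 ![a, a, a] ![b, b, a] ⊆ Box3 lo hi) ∧
    Box3 ![a, a, a] ![b, b, a] ⊆ Box3 ![a, a, a] ![b, b, b] ∧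
    ¬ ∃ lo hi : Fin 3 → I, (∀ i, lo i ≤ hi i) ∧
      ((maxMinSegment (![a, a, a]) (![b, b, b]) ⊆ Box3 lo hi ∧
          Box3 lo hi ∩ maxMinSegment (![b, a, a]) (![a, b, a]) = ∅) ∨
        (maxMinSegment (![b, a, a]) (![a, b, a]) ⊆ Box3 lo hi ∧
          Box3 lo hi ∩ maxMinSegment (![a, a, a]) (![b, b, b]) = ∅)) := by
  -- disjointness
  have hdisj : maxMinSegment (![a, a, a]) (![b, b, b]) ∩
      maxMinSegment (![b, a, a]) (![a, b, a]) = ∅ := by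
    ext z
    simp only [Set.mem_inter_iff, Set.mem_empty_iff_false, iff_false, not_and,
      maxMinSegment, Set.mem_setOf_eq]
    rintro ⟨α, β, hαβ, rfl⟩ ⟨γ, δ, hγδ, heq⟩
    have h0 := congrFun heq 0
    have h1 := congrFun heq 1
    have h2 := congrFun heq 2
    simp only [segPt, Matrix.cons_val_zero, Matrix.cons_val_one, Matrix.head_cons,
      Matrix.cons_val_two, Matrix.tail_cons] at h0 h1 h2
    rw [seg_const a γ δ hγδ] at h2
    rcases I_one_of_max hγδ with rfl | rfl
    · rw [I_min_one] at h0
      have : b ≤ a := h2 ▸ h0 ▸ le_max_left b (min δ a)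
      exact absurd this (not_le.mpr hab)
    · rw [I_min_one] at h1
      have hba : max (min α a) (min β b) = max (min α a) (min β b) := rfl
      have h12 : max (min γ a) b = a := by rw [← h1, h2]
      have : b ≤ a := h12 ▸ le_max_right (min γ a) b
      exact absurd this (not_le.mpr hab)
  -- C1 bound
  have hevA : ∀ i : Fin 3, (![a, a, a] : Fin 3 → I) i = a := by
    intro i; fin_cases i <;> rfl
  have hevB : ∀ i : Fin 3, (![b, b, b] : Fin 3 → I) i = b := by
    intro i; fin_cases i <;> rfl
  have hC1sub : maxMinSegment (![a, a, a]) (![b, b, b]) ⊆ Box3 ![a, a, a] ![b, b, b] := by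
    rintro z ⟨α, β, hαβ, rfl⟩
    simp only [Box3, Set.mem_setOf_eq, segPt]
    intro i
    rw [hevA, hevB]
    exact t_bounds a b hab.le α β hαβ
  -- C2 bound
  have hC2sub : maxMinSegment (![b, a, a]) (![a, b, a]) ⊆ Box3 ![a, a, a] ![b, b, a] := by
    rintro z ⟨α, β, hαβ, rfl⟩
    intro i
    have hβα : max β α = 1 := by rw [max_comm]; exact hαβ
    fin_cases i
    · show a ≤ max (min α b) (min β a) ∧ max (min α b) (min β a) ≤ b
      have := t_bounds a b hab.le β α hβα
      rw [max_comm] at this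
      exact this
    · exact t_bounds a b hab.le α β hαβ
    · show a ≤ max (min α a) (min β a) ∧ max (min α a) (min β a) ≤ a
      rw [seg_const a α β hαβ]
      exact ⟨le_refl a, le_refl a⟩
  -- minimality helpers
  have hAx : (![a, a, a] : Fin 3 → I) ∈ maxMinSegment (![a, a, a]) (![b, b, b]) :=
    seg_left _ _
  have hBx : (![b, b, b] : Fin 3 → I) ∈ maxMinSegment (![a, a, a]) (![b, b, b]) :=
    seg_right _ _
  have hP1 : (![b, a, a] : Fin 3 → I) ∈ maxMinSegment (![b, a, a]) (![a, b, a]) :=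
    seg_left _ _
  have hP2 : (![a, b, a] : Fin 3 → I) ∈ maxMinSegment (![b, a, a]) (![a, b, a]) :=
    seg_right _ _
  have hmin1 : ∀ lo hi : Fin 3 → I, (∀ i, lo i ≤ hi i) →
      maxMinSegment (![a, a, a]) (![b, b, b]) ⊆ Box3 lo hi →
      Box3 ![a, a, a] ![b, b, b] ⊆ Box3 lo hi := by
    intro lo hi _ hsub z hz i
    have ha := hsub hAx i
    have hb := hsub hBx i
    have hzi := hz i
    exact ⟨le_trans ha.1 hzi.1, le_trans hzi.2 hb.2⟩
  have hmin2 : ∀ lo hi : Fin 3 → I, (∀ i, lo i ≤ hi i) →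
      maxMinSegment (![b, a, a]) (![a, b, a]) ⊆ Box3 lo hi →
      Box3 ![a, a, a] ![b, b, a] ⊆ Box3 lo hi := by
    intro lo hi _ hsub z hz i
    have h1 := hsub hP1 i
    have h2 := hsub hP2 i
    have hzi := hz i
    fin_cases i
    · exact ⟨le_trans h2.1 hzi.1, le_trans hzi.2 h1.2⟩
    · exact ⟨le_trans h1.1 hzi.1, le_trans hzi.2 h2.2⟩
    · exact ⟨le_trans h1.1 hzi.1, le_trans hzi.2 h1.2⟩
  have hboxsub : Box3 ![a, a, a] ![b, b, a] ⊆ Box3 ![a, a, a] ![b, b, b] := by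
    intro z hz i
    have hzi := hz i
    fin_cases i
    · exact hzi
    · exact hzi
    · exact ⟨hzi.1, le_trans hzi.2 hab.le⟩
  refine ⟨hdisj, ⟨hC1sub, hmin1⟩, ⟨hC2sub, hmin2⟩, hboxsub, ?_⟩
  rintro ⟨lo, hi, hlohi, h | h⟩
  · have hbox := hmin1 lo hi hlohi h.1
    have hmem : (![b, a, a] : Fin 3 → I) ∈ Box3 lo hi :=
      hbox (hboxsub (hC2sub hP1))
    have : (![b, a, a] : Fin 3 → I) ∈ Box3 lo hi ∩ maxMinSegment (![b, a, a]) (![a, b, a]) :=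
      ⟨hmem, hP1⟩
    rw [h.2] at this
    exact this
  · have hbox := hmin2 lo hi hlohi h.1
    have hA : (![a, a, a] : Fin 3 → I) ∈ Box3 ![a, a, a] ![b, b, a] := by
      intro i
      fin_cases i
      · exact ⟨le_refl a, hab.le⟩
      · exact ⟨le_refl a, hab.le⟩
      · exact ⟨le_refl a, le_refl a⟩
    have : (![a, a, a] : Fin 3 → I) ∈ Box3 lo hi ∩ maxMinSegment (![a, a, a]) (![b, b, b]) :=
      ⟨hbox hA, hAx⟩
    rw [h.2] at this
    exact this
end
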